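/- Let E be a directed graph with a pair of paths μ, ν of equal positive length such that s(μ) = s(ν) but r(μ) ≠ r(ν), and let {s_e, p_v} be the universal Cuntz-Krieger E-family. Then the map β₁(a) := Σ_{e ∈ E¹} s_e a s_e* (when E¹ is finite) is not multiplicative on the core: β₁(s_μ s_ν*) = 0, while β₁((s_μ s_ν*)(s_ν s_μ*)) = β₁(s_μ s_μ*) ≠ 0. -/

import Mathlib

/-- `μ : Fin k → E1` is a path (edges composing left-to-right as `μ₁μ₂⋯μ_k` with
`s(μᵢ) = r(μᵢ₊₁)`) from source vertex `v` (the source of the last edge) to range vertex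
`w` (the range of the first edge); a path of length `0` is a vertex, and then `v = w`. -/
structure IsPathFromTo {E0 E1 : Type*} (r s : E1 → E0) {k : ℕ}
    (μ : Fin k → E1) (v w : E0) : Prop where
  chain : ∀ (i : ℕ) (h : i + 1 < k), s (μ ⟨i, by omega⟩) = r (μ ⟨i + 1, h⟩)
  rng : ∀ h : 0 < k, r (μ ⟨0, h⟩) = w
  src : ∀ h : 0 < k, s (μ ⟨k - 1, by omega⟩) = v
  deg : k = 0 → w = v

/-- The partial isometry `t_μ = t_{μ₁} ⋯ t_{μ_k}` associated to a path `μ` with range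
vertex `w`; for a genuine path the leading factor `p w` is redundant, and for the empty
path (a vertex) `t_μ = p w`. -/
def tPath {E0 E1 B : Type*} [Monoid B] (p : E0 → B) (t : E1 → B) {k : ℕ}
    (w : E0) (μ : Fin k → E1) : B :=
  p w * (List.ofFn fun i => t (μ i)).prod



/-- In a C*-algebra, a partial-isometry-type absorption: if `q` is a projection and
`star x * x = q`, then `x * q = x`. -/
lemma aux_absorb {B : Type*} [NonUnitalNormedRing B] [StarRing B] [CStarRing B] {x q : B}
    (hq : q * q = q) (hqs : star q = q) (hx : star x * x = q) : x * q = x := by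
  have h1 : ∀ y : B, star x * (x * y) = q * y := fun y => by rw [← mul_assoc, hx]
  have h0 : star (x * q - x) * (x * q - x) = 0 := by
    simp only [star_sub, star_mul, hqs, sub_mul, mul_sub, mul_assoc, h1, hx, hq]
    abel
  rw [CStarRing.star_mul_self_eq_zero_iff] at h0
  exact sub_eq_zero.mp h0

/-- The key product computation along a chain of composable edges. -/
lemma aux_listProd {E0 E1 B : Type*} [Ring B] [StarRing B]
    (r s : E1 → E0) (p : E0 → B) (t : E1 → B)
    (hisom : ∀ e, star (t e) * t e = p (s e))
    (hrange : ∀ e, p (r e) * t e = t e) :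
    ∀ (L : List E1) (e : E1), List.Chain' (fun a b => s a = r b) (e :: L) →
      star ((e :: L).map t).prod * ((e :: L).map t).prod = p (s (L.getLastD e))
  | [], e, _ => by simp [hisom]
  | (f :: L), e, h => by
    obtain ⟨hef, hL⟩ := List.isChain_cons_cons.mp h
    rw [List.getLastD_cons]
    have ih := aux_listProd r s p t hisom hrange L f hL
    have habs : p (s e) * ((f :: L).map t).prod = ((f :: L).map t).prod := by
      rw [List.map_cons, List.prod_cons, ← mul_assoc, hef, hrange]
    calc star ((e :: f :: L).map t).prod * ((e :: f :: L).map t).prod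
        = star (((f :: L).map t).prod) * ((star (t e) * t e)
            * ((f :: L).map t).prod) := by
          simp [List.map_cons, List.prod_cons, star_mul, mul_assoc]
      _ = star (((f :: L).map t).prod) * ((f :: L).map t).prod := by
          rw [hisom, habs]
      _ = p (s (L.getLastD f)) := ih

lemma aux_getLastD_ofFn {α : Type*} : ∀ {n : ℕ} (g : Fin (n + 1) → α) (d : α),
    (List.ofFn g).getLastD d = g (Fin.last n)
  | 0, g, d => by simp [List.ofFn_succ]
  | (n + 1), g, d => by
    rw [List.ofFn_succ, List.getLastD_cons, aux_getLastD_ofFn (fun i => g i.succ) (g 0)]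
    congr 1


/-- Let `E` be a finite directed graph with no sinks containing paths `μ, ν` of equal
positive length with common source `v` but different ranges `r(μ) ≠ r(ν)`, and let
`{t_e, p_v}` be a Cuntz–Krieger `E`-family with all vertex projections nonzero (as for
the universal family in `C*(E)`).  Then the "canonical endomorphism" candidate
`β₁(a) = ∑_{e ∈ E¹} t_e a t_e*` is not multiplicative on the core:
`β₁(t_μ t_ν*) = 0`, while `β₁((t_μ t_ν*)(t_μ t_ν*)*) = β₁(t_μ t_μ*) ≠ 0`. -/
theorem stmt18 {E0 E1 B : Type*} [CStarAlgebra B] [Fintype E1]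
    (r s : E1 → E0) (p : E0 → B) (t : E1 → B)
    (hproj : ∀ v, p v * p v = p v ∧ star (p v) = p v)
    (horthp : ∀ v w, v ≠ w → p v * p w = 0)
    (hisom : ∀ e, star (t e) * t e = p (s e))
    (hrange : ∀ e, p (r e) * t e = t e)
    (horth : ∀ e f, e ≠ f → star (t e) * t f = 0)
    (hCK : ∀ v : E0, ({e : E1 | r e = v}).Nonempty →
      ∀ rfin : Finset E1, (∀ e, e ∈ rfin ↔ r e = v) →
        p v = ∑ e ∈ rfin, t e * star (t e))
    (hpnz : ∀ v, p v ≠ 0)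
    (hnosink : ∀ v : E0, ∃ e : E1, s e = v)
    (k : ℕ) (μ ν : Fin (k + 1) → E1) (v wμ wν : E0)
    (hμ : IsPathFromTo r s μ v wμ) (hν : IsPathFromTo r s ν v wν)
    (hw : wμ ≠ wν) :
    (∑ e : E1, t e * (tPath p t wμ μ * star (tPath p t wν ν)) * star (t e)) = 0 ∧
    (∑ e : E1, t e *
        ((tPath p t wμ μ * star (tPath p t wν ν)) *
          star (tPath p t wμ μ * star (tPath p t wν ν))) * star (t e)) ≠ 0 := by
  -- key facts about paths
  have key : ∀ (w : E0) (ρ : Fin (k+1) → E1), IsPathFromTo r s ρ v w →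
      p w * (List.ofFn fun i => t (ρ i)).prod = (List.ofFn fun i => t (ρ i)).prod ∧
      star ((List.ofFn fun i => t (ρ i)).prod) * (List.ofFn fun i => t (ρ i)).prod
        = p v := by
    intro w ρ hρ
    have h0 : ρ ⟨0, Nat.succ_pos k⟩ = ρ 0 := rfl
    have hofn : (List.ofFn fun i => t (ρ i))
        = (ρ 0 :: List.ofFn fun i : Fin k => ρ i.succ).map t := by
      rw [List.map_cons, List.map_ofFn, List.ofFn_succ]
      rfl
    have hpw : p w * t (ρ 0) = t (ρ 0) := by
      rw [← hρ.rng (Nat.succ_pos k), h0, hrange]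
    have hchain : List.Chain' (fun a b => s a = r b)
        (ρ 0 :: List.ofFn fun i : Fin k => ρ i.succ) := by
      have : (ρ 0 :: List.ofFn fun i : Fin k => ρ i.succ) = List.ofFn ρ := by
        rw [← List.ofFn_succ]
      rw [this]; apply List.isChain_ofFn.mpr
      intro i hi
      exact hρ.chain i hi
    constructor
    · rw [hofn, List.map_cons, List.prod_cons, ← mul_assoc, hpw]
    · rw [hofn, aux_listProd r s p t hisom hrange _ _ hchain]
      congr 1
      rcases k with _ | m
      · simp only [List.ofFn_zero, List.getLastD_nil]
        exact hρ.src (Nat.succ_pos 0)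
      · rw [aux_getLastD_ofFn]
        have := hρ.src (Nat.succ_pos (m+1))
        convert this using 3
        rfl
  obtain ⟨habsμ, hQμ⟩ := key wμ μ hμ
  obtain ⟨habsν, hQν⟩ := key wν ν hν
  set Qμ := (List.ofFn fun i => t (μ i)).prod with hQμdef
  set Qν := (List.ofFn fun i => t (ν i)).prod with hQνdef
  have hTμ : tPath p t wμ μ = Qμ := habsμ
  have hTν : tPath p t wν ν = Qν := habsν
  have hTep : ∀ (e : E1) (x : E0), s e ≠ x → t e * p x = 0 := by
    intro e x hx
    have h1 : t e * p (s e) = t e := aux_absorb (hproj (s e)).1 (hproj (s e)).2 (hisom e)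
    rw [← h1, mul_assoc, horthp _ _ hx, mul_zero]
  constructor
  · -- β₁(t_μ t_ν*) = 0
    apply Finset.sum_eq_zero
    intro e _
    rw [hTμ, hTν]
    by_cases hse : s e = wμ
    · -- then s e ≠ wν; kill from the ν side
      have h2 : p wν * star (t e) = 0 := by
        have h3 := hTep e wν (by rw [hse]; exact hw)
        calc p wν * star (t e) = star (t e * star (p wν)) := by rw [star_mul, star_star]
          _ = star (t e * p wν) := by rw [(hproj wν).2]
          _ = 0 := by rw [h3, star_zero]
      have h4 : star Qν = star Qν * p wν := by
        conv_lhs => rw [← habsν]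
        rw [star_mul, (hproj wν).2]
      calc t e * (Qμ * star Qν) * star (t e)
          = t e * (Qμ * (star Qν * (p wν * star (t e)))) := by
            conv_lhs => rw [h4]
            simp only [mul_assoc]
        _ = 0 := by rw [h2, mul_zero, mul_zero, mul_zero]
    · -- kill from the μ side
      have h2 : t e * Qμ = 0 := by
        rw [← habsμ, ← mul_assoc, hTep e wμ hse, zero_mul]
      rw [← mul_assoc, h2, zero_mul, zero_mul]
  · -- β₁(t_μ t_μ*) ≠ 0
    intro hcontra
    rw [hTμ, hTν] at hcontra
    have habsμ' : Qμ * p v = Qμ := aux_absorb (hproj v).1 (hproj v).2 hQμ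
    have hinner : (Qμ * star Qν) * star (Qμ * star Qν) = Qμ * star Qμ := by
      rw [star_mul, star_star]
      calc Qμ * star Qν * (Qν * star Qμ)
          = Qμ * ((star Qν * Qν) * star Qμ) := by simp only [mul_assoc]
        _ = Qμ * (p v * star Qμ) := by rw [hQν]
        _ = (Qμ * p v) * star Qμ := by rw [mul_assoc]
        _ = Qμ * star Qμ := by rw [habsμ']
    rw [hinner] at hcontra
    obtain ⟨e₀, he₀⟩ := hnosink wμ
    have hstarabs : star Qμ * p wμ = star Qμ := by
      calc star Qμ * p wμ = star (p wμ * Qμ) := by rw [star_mul, (hproj wμ).2]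
        _ = star Qμ := by rw [habsμ]
    have hsum : ∑ e : E1, star (t e₀) * (t e * (Qμ * star Qμ) * star (t e)) * t e₀
        = Qμ * star Qμ := by
      rw [Finset.sum_eq_single e₀]
      · have hp : star (t e₀) * t e₀ = p wμ := by rw [hisom, he₀]
        calc star (t e₀) * (t e₀ * (Qμ * star Qμ) * star (t e₀)) * t e₀
            = (star (t e₀) * t e₀) * (Qμ * (star Qμ * (star (t e₀) * t e₀))) := by
              simp only [mul_assoc]
          _ = p wμ * (Qμ * (star Qμ * p wμ)) := by rw [hp]
          _ = Qμ * star Qμ := by rw [hstarabs, ← mul_assoc, habsμ]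
      · intro e _ hne
        have h5 : star (t e₀) * t e = 0 := horth e₀ e (Ne.symm hne)
        calc star (t e₀) * (t e * (Qμ * star Qμ) * star (t e)) * t e₀
            = (star (t e₀) * t e) * ((Qμ * star Qμ) * (star (t e) * t e₀)) := by
              simp only [mul_assoc]
          _ = 0 := by rw [h5, zero_mul]
      · intro h; exact absurd (Finset.mem_univ e₀) h
    have hzero : Qμ * star Qμ = 0 := by
      rw [← hsum, ← Finset.sum_mul, ← Finset.mul_sum, hcontra, mul_zero, zero_mul]
    have hQ0 : Qμ = 0 := (CStarRing.mul_star_self_eq_zero_iff Qμ).mp hzero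
    exact hpnz v (by rw [← hQμ, hQ0, mul_zero])
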